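/- Let F be a finite nonempty set of primes, let n ≥ 1, and set N = ∏_{p∈F} p^n. Then there exist at most |F| + 1 prime numbers q_1, ..., q_m, none belonging to F, whose residues modulo N generate the unit group (ℤ/Nℤ)ˣ. -/

import Mathlib

open Subgroup



lemma emult_one_add_p (p : ℕ) (hp : p.Prime) (hodd : Odd p) (k : ℕ) :
    emultiplicity (p : ℤ) ((1 + (p:ℤ)) ^ (p ^ k) - 1) = k + 1 := by
  have h := Int.emultiplicity_pow_sub_pow hp hodd (x := 1 + (p:ℤ)) (y := 1)
    (by simp) (by simpa using fun h => hp.one_lt.ne' (Nat.eq_one_of_dvd_one ((Int.natCast_dvd_natCast).mp (by simpa using h))) ) (p ^ k)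
  simp only [one_pow, add_sub_cancel_left] at h
  have e1 : emultiplicity (p:ℤ) (p:ℤ) = 1 := by
    simpa using emultiplicity_pow_self_of_prime (Nat.prime_iff_prime_int.mp hp) 1
  rw [h, e1, emultiplicity_pow_self_of_prime hp.prime k, add_comm]

lemma pow_dvd_one_add_p (p : ℕ) (hp : p.Prime) (hodd : Odd p) (n : ℕ) (hn : 1 ≤ n) :
    ((1 + p : ℕ) : ZMod (p ^ n)) ^ (p ^ (n - 1)) = 1 := by
  have h : ((p:ℤ) ^ n) ∣ (1 + (p:ℤ)) ^ (p ^ (n-1)) - 1 := by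
    apply pow_dvd_of_le_emultiplicity
    rw [emult_one_add_p p hp hodd]
    exact_mod_cast by omega
  have := (ZMod.intCast_zmod_eq_zero_iff_dvd ((1 + (p:ℤ)) ^ (p ^ (n-1)) - 1) (p ^ n)).mpr (by exact_mod_cast h)
  push_cast at this
  push_cast
  linear_combination this

lemma not_pow_dvd_one_add_p (p : ℕ) (hp : p.Prime) (hodd : Odd p) (n : ℕ) (hn : 2 ≤ n) :
    ((1 + p : ℕ) : ZMod (p ^ n)) ^ (p ^ (n - 2)) ≠ 1 := by
  intro hcontra
  have h : ((p:ℤ) ^ n) ∣ (1 + (p:ℤ)) ^ (p ^ (n-2)) - 1 := by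
    have : (((1 + (p:ℤ)) ^ (p ^ (n-2)) - 1 : ℤ) : ZMod (p ^ n)) = 0 := by
      push_cast
      push_cast at hcontra
      linear_combination hcontra
    exact_mod_cast (ZMod.intCast_zmod_eq_zero_iff_dvd _ _).mp this
  have h2 := le_emultiplicity_of_pow_dvd h
  rw [emult_one_add_p p hp hodd] at h2
  have : (n : ℕ∞) ≤ ((n - 2 : ℕ) : ℕ∞) + 1 := h2
  have : n ≤ (n-2) + 1 := by exact_mod_cast this
  omega


lemma coprime_one_add_p (p n : ℕ) : (1 + p).Coprime (p ^ n) :=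
  Nat.Coprime.pow_right n (by simpa [Nat.add_comm] using (Nat.coprime_succ_self_left (n := p)))

lemma isCyclic_units_odd (p : ℕ) (hp : p.Prime) (hodd : Odd p) (n : ℕ) (hn : 1 ≤ n) :
    IsCyclic (ZMod (p ^ n))ˣ := by
  haveI : Fact p.Prime := ⟨hp⟩
  haveI : NeZero (p ^ n) := ⟨pow_ne_zero n hp.ne_zero⟩
  have hp2 := hp.two_le
  set u : (ZMod (p ^ n))ˣ := ZMod.unitOfCoprime (1 + p) (coprime_one_add_p p n) with hu
  have hupow : u ^ (p ^ (n - 1)) = 1 := by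
    ext
    rw [Units.val_pow_eq_pow_val, Units.val_one, hu, ZMod.coe_unitOfCoprime]
    exact_mod_cast pow_dvd_one_add_p p hp hodd n hn
  have hordu : orderOf u = p ^ (n - 1) := by
    have hdvd := orderOf_dvd_of_pow_eq_one hupow
    obtain ⟨j, hj, hje⟩ := (Nat.dvd_prime_pow hp).mp hdvd
    rcases eq_or_lt_of_le hj with rfl | hjlt
    · exact hje
    · exfalso
      have hn2 : 2 ≤ n := by omega
      have h1 : u ^ (p ^ (n - 2)) = 1 := by
        apply orderOf_dvd_iff_pow_eq_one.mp
        rw [hje]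
        exact pow_dvd_pow p (by omega)
      apply not_pow_dvd_one_add_p p hp hodd n hn2
      have h2 := congrArg (Units.val) h1
      rw [Units.val_pow_eq_pow_val, Units.val_one, hu, ZMod.coe_unitOfCoprime] at h2
      exact_mod_cast h2
  obtain ⟨g, hg⟩ := IsCyclic.exists_generator (α := (ZMod p)ˣ)
  have hordg : orderOf g = p - 1 := by
    rw [orderOf_eq_card_of_forall_mem_zpowers hg, Nat.card_eq_fintype_card, ZMod.card_units]
  have hdvd : p ∣ p ^ n := dvd_pow_self p (by omega)
  obtain ⟨u₀, hu₀⟩ := ZMod.unitsMap_surjective hdvd g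
  set v := u₀ ^ (p ^ (n - 1)) with hv
  have hcard : Fintype.card (ZMod (p ^ n))ˣ = p ^ (n - 1) * (p - 1) := by
    rw [ZMod.card_units_eq_totient, Nat.totient_prime_pow hp (by omega)]
  have hpcop : Nat.Coprime p (p - 1) :=
    (hp.coprime_iff_not_dvd).mpr (Nat.not_dvd_of_pos_of_lt (by omega) (by omega))
  have hcop : Nat.gcd (p - 1) (p ^ (n - 1)) = 1 :=
    Nat.Coprime.pow_right _ hpcop.symm
  have hordv : orderOf v = p - 1 := by
    apply Nat.dvd_antisymm
    · apply orderOf_dvd_of_pow_eq_one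
      rw [hv, ← pow_mul, ← hcard]
      exact pow_card_eq_one
    · have h1 : orderOf (ZMod.unitsMap hdvd v) ∣ orderOf v := orderOf_map_dvd _ _
      rwa [hv, map_pow, hu₀, orderOf_pow, hordg, hcop, Nat.div_one] at h1
  have hord : orderOf (u * v) = p ^ (n - 1) * (p - 1) := by
    rw [(Commute.all u v).orderOf_mul_eq_mul_orderOf_of_coprime
      (by rw [hordu, hordv]; exact Nat.Coprime.pow_left _ hpcop), hordu, hordv]
  exact isCyclic_of_orderOf_eq_card (u * v) (by rw [Nat.card_eq_fintype_card, hord, hcard])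


lemma emult_five (k : ℕ) : emultiplicity (2 : ℤ) ((5:ℤ) ^ (2 ^ k) - 1) = k + 2 := by
  have h := Int.two_pow_two_pow_sub_pow_two_pow (x := 5) (y := 1) k (by norm_num) (by norm_num)
  simp only [one_pow] at h
  have e4 : emultiplicity (2:ℤ) (5 - 1) = 2 := by
    have : ((5:ℤ) - 1) = 2 ^ 2 := by norm_num
    rw [this]
    exact_mod_cast emultiplicity_pow_self_of_prime Int.prime_two 2
  rw [h, e4, add_comm]

lemma five_pow_eq_one (n : ℕ) (hn : 2 ≤ n) :
    ((5 : ℕ) : ZMod (2 ^ n)) ^ (2 ^ (n - 2)) = 1 := by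
  have h : ((2:ℤ) ^ n) ∣ (5:ℤ) ^ (2 ^ (n-2)) - 1 := by
    apply pow_dvd_of_le_emultiplicity
    rw [emult_five]
    exact_mod_cast by omega
  have := (ZMod.intCast_zmod_eq_zero_iff_dvd ((5:ℤ) ^ (2 ^ (n-2)) - 1) (2 ^ n)).mpr (by exact_mod_cast h)
  push_cast at this
  push_cast
  linear_combination this

lemma five_pow_ne_one (n : ℕ) (hn : 3 ≤ n) :
    ((5 : ℕ) : ZMod (2 ^ n)) ^ (2 ^ (n - 3)) ≠ 1 := by
  intro hcontra
  have h : ((2:ℤ) ^ n) ∣ (5:ℤ) ^ (2 ^ (n-3)) - 1 := by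
    have : (((5:ℤ) ^ (2 ^ (n-3)) - 1 : ℤ) : ZMod (2 ^ n)) = 0 := by
      push_cast
      push_cast at hcontra
      linear_combination hcontra
    exact_mod_cast (ZMod.intCast_zmod_eq_zero_iff_dvd _ _).mp this
  have h2 := le_emultiplicity_of_pow_dvd h
  rw [emult_five] at h2
  have : n ≤ (n-3) + 2 := by exact_mod_cast h2
  omega

lemma gen_two_pow (n : ℕ) (hn : 1 ≤ n) :
    ∃ S : Finset (ZMod (2 ^ n))ˣ, S.card ≤ 2 ∧ Subgroup.closure (S : Set (ZMod (2 ^ n))ˣ) = ⊤ := by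
  haveI : NeZero (2 ^ n) := ⟨pow_ne_zero n two_ne_zero⟩
  rcases Nat.lt_or_ge n 2 with h1 | hn2
  · -- n = 1 : group is trivial
    interval_cases n
    refine ⟨∅, by simp, ?_⟩
    rw [eq_top_iff']
    intro x
    have : x = 1 := by revert x; decide
    rw [this]
    exact one_mem _
  · -- n ≥ 2
    have h45 : (5 : ℕ).Coprime (2 ^ n) := Nat.Coprime.pow_right n (by norm_num)
    set u : (ZMod (2 ^ n))ˣ := ZMod.unitOfCoprime 5 h45 with hu
    have hupow : u ^ (2 ^ (n - 2)) = 1 := by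
      ext
      rw [Units.val_pow_eq_pow_val, Units.val_one, hu, ZMod.coe_unitOfCoprime]
      exact five_pow_eq_one n hn2
    have hordu : orderOf u = 2 ^ (n - 2) := by
      have hdvd := orderOf_dvd_of_pow_eq_one hupow
      obtain ⟨j, hj, hje⟩ := (Nat.dvd_prime_pow Nat.prime_two).mp hdvd
      rcases eq_or_lt_of_le hj with rfl | hjlt
      · exact hje
      · exfalso
        have hn3 : 3 ≤ n := by omega
        have h1 : u ^ (2 ^ (n - 3)) = 1 := by
          apply orderOf_dvd_iff_pow_eq_one.mp
          rw [hje]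
          exact pow_dvd_pow 2 (by omega)
        apply five_pow_ne_one n hn3
        have h2 := congrArg (Units.val) h1
        rw [Units.val_pow_eq_pow_val, Units.val_one, hu, ZMod.coe_unitOfCoprime] at h2
        exact h2
    -- the map to (ZMod 4)ˣ
    have hd4 : (4 : ℕ) ∣ 2 ^ n := by
      have : (4:ℕ) = 2 ^ 2 := by norm_num
      rw [this]; exact pow_dvd_pow 2 hn2
    set φ := ZMod.unitsMap hd4 with hφ
    have hφu : φ u = 1 := by
      ext
      rw [hφ, ZMod.unitsMap_def]
      show (ZMod.castHom hd4 (ZMod 4)) (u : ZMod (2^n)) = ((1 : (ZMod 4)ˣ) : ZMod 4)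
      rw [hu, ZMod.coe_unitOfCoprime, map_natCast]
      decide
    have hφneg : φ (-1) = -1 := by
      ext
      rw [hφ, ZMod.unitsMap_def]
      show (ZMod.castHom hd4 (ZMod 4)) ((-1 : (ZMod (2^n))ˣ) : ZMod (2^n)) = ((-1 : (ZMod 4)ˣ) : ZMod 4)
      rw [Units.val_neg, Units.val_neg, Units.val_one, Units.val_one, map_neg, map_one]
    have hneg_not : (-1 : (ZMod (2 ^ n))ˣ) ∉ zpowers u := by
      intro hmem
      obtain ⟨k, hk⟩ := hmem
      have := congrArg φ hk
      rw [map_zpow, hφu, one_zpow, hφneg] at this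
      exact (by decide : (-1 : (ZMod 4)ˣ) ≠ 1) this.symm
    refine ⟨{-1, u}, Finset.card_insert_le _ _ |>.trans (by simp), ?_⟩
    set H := Subgroup.closure (({-1, u} : Finset (ZMod (2^n))ˣ) : Set (ZMod (2^n))ˣ) with hH
    have huH : u ∈ H := Subgroup.subset_closure (by simp)
    have hnegH : (-1 : (ZMod (2^n))ˣ) ∈ H := Subgroup.subset_closure (by simp)
    have hKH : Subgroup.zpowers u ≤ H := Subgroup.zpowers_le.mpr huH
    have hcardK : Nat.card (Subgroup.zpowers u) = 2 ^ (n-2) := by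
      rw [Nat.card_zpowers, hordu]
    have hcardG : Nat.card (ZMod (2^n))ˣ = 2 ^ (n-1) := by
      rw [Nat.card_eq_fintype_card, ZMod.card_units_eq_totient,
        Nat.totient_prime_pow Nat.prime_two (by omega)]
      norm_num
    have hdvd1 : (2:ℕ) ^ (n-2) ∣ Nat.card H := hcardK ▸ Subgroup.card_dvd_of_le hKH
    have hdvd2 : Nat.card H ∣ 2 ^ (n-1) := hcardG ▸ Subgroup.card_subgroup_dvd_card H
    have hne : Nat.card H ≠ 2 ^ (n-2) := by
      intro hEq
      have heq : Subgroup.zpowers u = H := Subgroup.eq_of_le_of_card_ge hKH (by rw [hEq, hcardK])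
      exact hneg_not (heq ▸ hnegH)
    obtain ⟨b, hb, hbe⟩ := (Nat.dvd_prime_pow Nat.prime_two).mp hdvd2
    have hge : n - 2 ≤ b := by
      rw [hbe] at hdvd1
      exact (Nat.pow_dvd_pow_iff_le_right one_lt_two).mp hdvd1
    have hbne : b ≠ n - 2 := fun h => hne (by rw [hbe, h])
    have hbeq : b = n - 1 := by omega
    apply Subgroup.eq_top_of_card_eq
    rw [hbe, hbeq, hcardG]


lemma closure_prod_top {G H : Type*} [Group G] [Group H] {S : Set G} {T : Set H}
    (hS : Subgroup.closure S = ⊤) (hT : Subgroup.closure T = ⊤) :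
    Subgroup.closure ((fun g => ((g, 1) : G × H)) '' S ∪ (fun h => ((1, h) : G × H)) '' T) = ⊤ := by
  have h1 : (fun g => ((g, 1) : G × H)) = ⇑(MonoidHom.inl G H) := rfl
  have h2 : (fun h => ((1, h) : G × H)) = ⇑(MonoidHom.inr G H) := rfl
  rw [h1, h2, Subgroup.closure_union, ← MonoidHom.map_closure, ← MonoidHom.map_closure, hS, hT]
  rw [eq_top_iff']
  intro ⟨a, b⟩
  have : (a, b) = ((a, 1) : G × H) * (1, b) := by simp
  rw [this]
  exact mul_mem
    (Subgroup.mem_sup_left ⟨a, Subgroup.mem_top a, rfl⟩)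
    (Subgroup.mem_sup_right ⟨b, Subgroup.mem_top b, rfl⟩)

lemma closure_image_equiv {G H : Type*} [Group G] [Group H] (e : G ≃* H) {S : Set G}
    (hS : Subgroup.closure S = ⊤) : Subgroup.closure (⇑e '' S) = ⊤ := by
  have : ⇑e = ⇑e.toMonoidHom := rfl
  rw [this, ← MonoidHom.map_closure, hS, Subgroup.map_top_of_surjective _ e.surjective]


lemma gen_prime_pow (p : ℕ) (hp : p.Prime) (n : ℕ) (hn : 1 ≤ n) :
    ∃ S : Finset (ZMod (p ^ n))ˣ, S.card ≤ (if p = 2 then 2 else 1) ∧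
      Subgroup.closure (S : Set (ZMod (p ^ n))ˣ) = ⊤ := by
  by_cases h2 : p = 2
  · subst h2
    obtain ⟨S, h1, h2⟩ := gen_two_pow n hn
    exact ⟨S, by simpa using h1, h2⟩
  · haveI := isCyclic_units_odd p hp (hp.odd_of_ne_two h2) n hn
    obtain ⟨g, hg⟩ := IsCyclic.exists_generator (α := (ZMod (p ^ n))ˣ)
    refine ⟨{g}, by simp [h2], ?_⟩
    rw [Finset.coe_singleton, ← Subgroup.zpowers_eq_closure, eq_top_iff']
    exact hg

lemma gen_units (n : ℕ) (hn : 1 ≤ n) (F : Finset ℕ) (hF : ∀ p ∈ F, p.Prime) :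
    ∀ N : ℕ, N = ∏ p ∈ F, p ^ n →
    ∃ S : Finset (ZMod N)ˣ, S.card ≤ F.card + (if 2 ∈ F then 1 else 0) ∧
      Subgroup.closure (S : Set (ZMod N)ˣ) = ⊤ := by
  induction F using Finset.induction with
  | empty =>
    intro N hN
    simp only [Finset.prod_empty] at hN
    subst hN
    refine ⟨∅, by simp, ?_⟩
    rw [eq_top_iff']
    intro x
    have : x = 1 := by
      ext
      exact Subsingleton.elim _ _
    rw [this]
    exact one_mem _
  | @insert p F' hpF' ih =>
    intro N hN
    rw [Finset.prod_insert hpF'] at hN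
    subst hN
    have hp : p.Prime := hF p (Finset.mem_insert_self p F')
    have hF'2 : ∀ q ∈ F', q.Prime := fun q hq => hF q (Finset.mem_insert_of_mem hq)
    obtain ⟨T, hTcard, hTgen⟩ := ih hF'2 (∏ q ∈ F', q ^ n) rfl
    obtain ⟨S₁, hS₁card, hS₁gen⟩ := gen_prime_pow p hp n hn
    have hcop : Nat.Coprime (p ^ n) (∏ q ∈ F', q ^ n) := by
      apply Nat.Coprime.prod_right
      intro q hq
      exact Nat.coprime_pow_primes n n hp (hF'2 q hq) (fun h => hpF' (h ▸ hq))
    let e : ((ZMod (p ^ n))ˣ × (ZMod (∏ q ∈ F', q ^ n))ˣ) ≃* (ZMod (p ^ n * ∏ q ∈ F', q ^ n))ˣ :=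
      ((Units.mapEquiv (ZMod.chineseRemainder hcop).toMulEquiv).trans MulEquiv.prodUnits).symm
    classical
    set A : Finset ((ZMod (p ^ n))ˣ × (ZMod (∏ q ∈ F', q ^ n))ˣ) :=
      S₁.image (fun g => (g, 1)) ∪ T.image (fun h => (1, h)) with hA
    refine ⟨A.image e, ?_, ?_⟩
    · calc (A.image e).card ≤ A.card := Finset.card_image_le
        _ ≤ S₁.card + T.card := (Finset.card_union_le _ _).trans
            (by gcongr <;> exact Finset.card_image_le)
        _ ≤ (insert p F').card + (if 2 ∈ insert p F' then 1 else 0) := by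
          rw [Finset.card_insert_of_notMem hpF']
          by_cases hp2 : p = 2
          · have h2F' : (2 : ℕ) ∉ F' := hp2 ▸ hpF'
            rw [if_neg h2F'] at hTcard
            rw [if_pos hp2] at hS₁card
            rw [if_pos (hp2 ▸ Finset.mem_insert_self p F')]
            omega
          · rw [if_neg hp2] at hS₁card
            have hins : (2 ∈ insert p F') ↔ (2 ∈ F') := by
              rw [Finset.mem_insert]
              exact or_iff_right (fun h => hp2 h.symm)
            by_cases h2F : 2 ∈ F'
            · rw [if_pos (hins.mpr h2F)]
              rw [if_pos h2F] at hTcard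
              omega
            · rw [if_neg (fun h => h2F (hins.mp h))]
              rw [if_neg h2F] at hTcard
              omega
    · rw [Finset.coe_image, hA, Finset.coe_union, Finset.coe_image, Finset.coe_image]
      exact closure_image_equiv e (closure_prod_top hS₁gen hTgen)


theorem exists_primes_generating_units
    (F : Finset ℕ) (hF : ∀ p ∈ F, p.Prime) (hne : F.Nonempty)
    (n : ℕ) (hn : 1 ≤ n) (N : ℕ) (hN : N = ∏ p ∈ F, p ^ n) :
    ∃ m : ℕ, m ≤ F.card + 1 ∧ ∃ q : Fin m → ℕ,
      (∀ i, (q i).Prime ∧ q i ∉ F) ∧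
      Subgroup.closure
        {u : (ZMod N)ˣ | ∃ i : Fin m, (u : ZMod N) = ((q i : ℕ) : ZMod N)} = ⊤ := by
  haveI hN0 : NeZero N := ⟨by
    rw [hN]
    exact Finset.prod_ne_zero_iff.mpr (fun p hp => pow_ne_zero n (hF p hp).pos.ne')⟩
  obtain ⟨S, hScard, hSgen⟩ := gen_units n hn F hF N hN
  have hbound : S.card ≤ F.card + 1 := hScard.trans (by split_ifs <;> omega)
  have hchoice : ∀ s : {x // x ∈ S}, ∃ qq : ℕ, qq.Prime ∧ qq ∉ F ∧
      ((qq : ZMod N) = ((s : (ZMod N)ˣ) : ZMod N)) := by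
    intro s
    obtain ⟨qq, _, hq, hqs⟩ := Nat.forall_exists_prime_gt_and_eq_mod
      (a := ((s : (ZMod N)ˣ) : ZMod N)) (Units.isUnit _) 0
    refine ⟨qq, hq, ?_, hqs⟩
    intro hqF
    have hqdvd : qq ∣ N := hN ▸ dvd_trans (dvd_pow_self qq (by omega))
      (Finset.dvd_prod_of_mem _ hqF)
    have hunit : IsUnit ((qq : ℕ) : ZMod N) := hqs ▸ Units.isUnit s.val
    have hcop : qq.Coprime N := (ZMod.isUnit_iff_coprime qq N).mp hunit
    have : qq = 1 := Nat.eq_one_of_dvd_coprimes hcop dvd_rfl hqdvd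
    exact hq.one_lt.ne' this
  choose f hf1 hf2 hf3 using hchoice
  refine ⟨S.card, hbound, fun i => f (S.equivFin.symm i), fun i => ⟨hf1 _, hf2 _⟩, ?_⟩
  rw [eq_top_iff, ← hSgen]
  apply Subgroup.closure_mono
  intro x hx
  refine ⟨S.equivFin ⟨x, hx⟩, ?_⟩
  show (x : ZMod N) = ↑(f (S.equivFin.symm (S.equivFin ⟨x, hx⟩)))
  rw [Equiv.symm_apply_apply]
  exact (hf3 ⟨x, hx⟩).symm
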